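/- Let f ∈ S_n be an n-cycle on X = {1,...,n}, and let m be an integer with 1 < m < n. Then m divides n if and only if there exists a nontrivial m-block partition P of X such that f ∈ S(X,P). -/

import Mathlib

/-- `f` sends each block of the partition `P` into some block of `P`. -/
def PreservesPart {α : Type*} (P : Set (Set α)) (f : α → α) : Prop :=
  ∀ b ∈ P, ∃ b' ∈ P, f '' b ⊆ b'

/-- A permutation `f` belongs to `S(X,P)`, the group of units of `T(X,P)`:
both `f` and `f⁻¹` send each block into some block. -/
def InSPart {α : Type*} (P : Set (Set α)) (f : Equiv.Perm α) : Prop :=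
  PreservesPart P f ∧ PreservesPart P f.symm

/-- A partition is nontrivial: it has a non-singleton block and more than one block. -/
def NontrivialPart {α : Type*} (P : Set (Set α)) : Prop :=
  (∃ b ∈ P, ∀ x : α, b ≠ {x}) ∧ ∃ b ∈ P, ∃ b' ∈ P, b ≠ b'

/-- `f` is an `n`-cycle on `Fin n`: a cycle moving every point. -/
def IsFullCycle {n : ℕ} (f : Equiv.Perm (Fin n)) : Prop :=
  f.IsCycle ∧ f.support = Finset.univ

open Pointwise

section Aux

variable {α : Type*} {P : Set (Set α)}

lemma block_nonempty (hP : Setoid.IsPartition P) {b : Set α} (hb : b ∈ P) : b.Nonempty := by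
  rcases Set.eq_empty_or_nonempty b with h | h
  · exact absurd (h ▸ hb) hP.1
  · exact h

lemma block_eq_of_mem (hP : Setoid.IsPartition P) {b c : Set α} {x : α}
    (hb : b ∈ P) (hc : c ∈ P) (hxb : x ∈ b) (hxc : x ∈ c) : b = c := by
  obtain ⟨d, _, hd⟩ := hP.2 x
  rw [hd b ⟨hb, hxb⟩, hd c ⟨hc, hxc⟩]

/-- The image of a block under a partition-preserving permutation is a block. -/
lemma image_block_mem (hP : Setoid.IsPartition P) {f : Equiv.Perm α}
    (h1 : PreservesPart P f) (h2 : PreservesPart P f.symm)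
    {b : Set α} (hb : b ∈ P) : ⇑f '' b ∈ P := by
  obtain ⟨b', hb', hsub⟩ := h1 b hb
  obtain ⟨b'', hb'', hsub'⟩ := h2 b' hb'
  obtain ⟨y, hy⟩ := block_nonempty hP hb
  have hfy : f y ∈ b' := hsub ⟨y, hy, rfl⟩
  have hyb'' : y ∈ b'' := by
    have := hsub' ⟨f y, hfy, rfl⟩
    simpa using this
  have hbb'' : b = b'' := block_eq_of_mem hP hb hb'' hy hyb''
  have : ⇑f '' b = b' := by
    apply Set.Subset.antisymm hsub
    intro z hz
    have : f.symm z ∈ b := by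
      rw [hbb'']
      exact hsub' ⟨z, hz, rfl⟩
    exact ⟨f.symm z, this, f.apply_symm_apply z⟩
  rw [this]; exact hb'

lemma zpow_image_block_mem (hP : Setoid.IsPartition P) {f : Equiv.Perm α}
    (hsp : InSPart P f) (k : ℤ) {b : Set α} (hb : b ∈ P) : ⇑(f ^ k) '' b ∈ P := by
  induction k using Int.induction_on with
  | zero => simpa using hb
  | succ i ih =>
      have : (f ^ ((i : ℤ) + 1)) = f * f ^ (i : ℤ) := by group
      rw [this]
      have : ⇑(f * f ^ (i : ℤ)) '' b = ⇑f '' (⇑(f ^ (i : ℤ)) '' b) := by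
        rw [← Set.image_comp]; rfl
      rw [this]
      exact image_block_mem hP hsp.1 hsp.2 ih
  | pred i ih =>
      have h1 : (f ^ (-(i : ℤ) - 1)) = f⁻¹ * f ^ (-(i : ℤ)) := by group
      rw [h1]
      have : ⇑(f⁻¹ * f ^ (-(i : ℤ))) '' b = ⇑f⁻¹ '' (⇑(f ^ (-(i : ℤ))) '' b) := by
        rw [← Set.image_comp]; rfl
      rw [this]
      have hinv : ⇑f⁻¹ = ⇑f.symm := rfl
      rw [hinv]
      exact image_block_mem hP hsp.2 (by simpa using hsp.1) ih

end Aux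

theorem stmt8 {n : ℕ} (f : Equiv.Perm (Fin n)) (hf : IsFullCycle f)
    (m : ℕ) (hm1 : 1 < m) (hmn : m < n) :
    m ∣ n ↔ ∃ P : Set (Set (Fin n)), Setoid.IsPartition P ∧ P.ncard = m ∧ InSPart P f := by
  have hn0 : 0 < n := lt_trans (lt_trans Nat.zero_lt_one hm1) hmn
  haveI : NeZero n := ⟨hn0.ne'⟩
  haveI : NeZero m := ⟨(Nat.zero_lt_of_lt hm1).ne'⟩
  -- basic facts about the full cycle
  obtain ⟨hcyc, hsupp⟩ := hf
  have hmove : ∀ y : Fin n, f y ≠ y := by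
    intro y
    have : y ∈ f.support := hsupp ▸ Finset.mem_univ y
    exact Equiv.Perm.mem_support.mp this
  have horder : orderOf f = n := by
    rw [Equiv.Perm.IsCycle.orderOf hcyc, hsupp, Finset.card_univ, Fintype.card_fin]
  obtain ⟨x0, -, hx0⟩ := hcyc
  have htrans : ∀ y : Fin n, ∃ i : ℤ, (f ^ i) x0 = y := fun y => hx0 (hmove y)
  have hzpow_n : ∀ t : ℤ, f ^ ((n : ℤ) * t) = 1 := by
    intro t
    have h1 : f ^ (n : ℤ) = 1 := by
      rw [zpow_natCast]
      exact orderOf_dvd_iff_pow_eq_one.mp (by rw [horder])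
    rw [zpow_mul, h1, one_zpow]
  constructor
  · -- m ∣ n → construct partition
    intro hdvd
    -- the enumeration map
    set eFun : ZMod n → Fin n := fun k => (f ^ (k.val)) x0 with heFun
    have hkey : ∀ i : ℤ, (f ^ i) x0 = eFun ((i : ZMod n)) := by
      intro i
      have hd : (n : ℤ) ∣ (i - ((i : ZMod n).val : ℤ)) := by
        rw [← ZMod.intCast_zmod_eq_zero_iff_dvd]
        push_cast
        rw [ZMod.natCast_val, ZMod.cast_id]
        ring
      obtain ⟨t, ht⟩ := hd
      have hieq : (i : ℤ) = ((i : ZMod n).val : ℤ) + (n : ℤ) * t := by linarith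
      have hpow : f ^ i = f ^ (((i : ZMod n).val : ℤ)) := by
        conv_lhs => rw [hieq]
        rw [zpow_add, hzpow_n, mul_one]
      show (f ^ i) x0 = (f ^ ((i : ZMod n).val)) x0
      rw [hpow, zpow_natCast]
    have hsurj : Function.Surjective eFun := by
      intro y
      obtain ⟨i, hi⟩ := htrans y
      exact ⟨(i : ZMod n), by rw [← hkey i, hi]⟩
    have hbij : Function.Bijective eFun := by
      rw [Fintype.bijective_iff_surjective_and_card]
      exact ⟨hsurj, by simp⟩
    set e : ZMod n ≃ Fin n := Equiv.ofBijective eFun hbij with he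
    set g : Fin n → ZMod m := fun x => ZMod.castHom hdvd (ZMod m) (e.symm x) with hg
    have hstep : ∀ x : Fin n, g (f x) = g x + 1 := by
      intro x
      have hx : x = eFun (e.symm x) := (e.apply_symm_apply x).symm
      have : f x = eFun (e.symm x + 1) := by
        conv_lhs => rw [hx]
        rw [heFun]
        simp only
        rw [← Equiv.Perm.mul_apply, ← pow_succ']
        have h2 : (↑((e.symm x).val + 1) : ZMod n) = e.symm x + 1 := by
          push_cast
          rw [ZMod.natCast_val, ZMod.cast_id]
        calc (f ^ ((e.symm x).val + 1)) x0 = (f ^ (((e.symm x).val + 1 : ℕ) : ℤ)) x0 := by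
              rw [zpow_natCast]
          _ = eFun ((((e.symm x).val + 1 : ℕ) : ℤ) : ZMod n) := hkey _
          _ = eFun (e.symm x + 1) := by push_cast at h2 ⊢; rw [h2]
      have he2 : e.symm (f x) = e.symm x + 1 := by
        rw [this]
        exact e.symm_apply_apply _
      rw [hg]; simp only [he2, map_add, map_one]
    have hgsurj : Function.Surjective g := by
      intro i
      refine ⟨e ((i.val : ZMod n)), ?_⟩
      rw [hg]
      simp only [Equiv.symm_apply_apply, map_natCast]
      exact ZMod.natCast_rightInverse i
    refine ⟨Set.range (fun i : ZMod m => g ⁻¹' {i}), ?_, ?_, ?_, ?_⟩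
    · constructor
      · rintro ⟨i, hi⟩
        have hi' : g ⁻¹' {i} = ∅ := hi
        obtain ⟨x, hx⟩ := hgsurj i
        have : x ∈ g ⁻¹' {i} := hx
        rw [hi'] at this
        exact this
      · intro x
        refine ⟨g ⁻¹' {g x}, ⟨⟨g x, rfl⟩, rfl⟩, ?_⟩
        rintro b ⟨⟨i, rfl⟩, hxb⟩
        have : g x = i := hxb
        rw [this]
    · have hinj : Function.Injective (fun i : ZMod m => g ⁻¹' {i}) := by
        intro i j hij
        have hij' : g ⁻¹' {i} = g ⁻¹' {j} := hij
        obtain ⟨x, hx⟩ := hgsurj i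
        have : x ∈ g ⁻¹' {j} := by rw [← hij']; exact hx
        rw [← hx]; exact this
      rw [← Set.image_univ, Set.ncard_image_of_injective _ hinj, Set.ncard_univ, Nat.card_zmod]
    · rintro b ⟨i, rfl⟩
      refine ⟨g ⁻¹' {i + 1}, ⟨i + 1, rfl⟩, ?_⟩
      rintro y ⟨x, hx, rfl⟩
      have : g x = i := hx
      simp [Set.mem_preimage, hstep x, this]
    · rintro b ⟨i, rfl⟩
      refine ⟨g ⁻¹' {i - 1}, ⟨i - 1, rfl⟩, ?_⟩
      rintro y ⟨x, hx, rfl⟩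
      have hgx : g x = i := hx
      have : g (f (f.symm x)) = g (f.symm x) + 1 := hstep _
      rw [f.apply_symm_apply] at this
      have h2 : g (f.symm x) = i - 1 := by
        rw [hgx] at this
        exact eq_sub_of_add_eq this.symm
      exact h2
  · -- partition exists → m ∣ n
    rintro ⟨P, hP, hPm, hsp⟩
    set G := Subgroup.zpowers f with hG
    haveI : MulAction.IsPretransitive G (Fin n) := by
      constructor
      intro x y
      obtain ⟨i, hi⟩ := htrans x
      obtain ⟨j, hj⟩ := htrans y
      refine ⟨⟨f ^ (j - i), Subgroup.zpow_mem _ (Subgroup.mem_zpowers f) _⟩, ?_⟩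
      show (f ^ (j - i)) x = y
      rw [← hi, ← Equiv.Perm.mul_apply, ← zpow_add, sub_add_cancel, hj]
    -- every translate of a block is a block of P
    have hsmul_mem : ∀ (g : G) {b : Set (Fin n)}, b ∈ P → g • b ∈ P := by
      rintro ⟨g, hg⟩ b hb
      obtain ⟨k, rfl⟩ := Subgroup.mem_zpowers_iff.mp hg
      have : (⟨f ^ k, hg⟩ : G) • b = ⇑(f ^ k) '' b := rfl
      rw [this]
      exact zpow_image_block_mem hP hsp k hb
    obtain ⟨b, hb⟩ : P.Nonempty := by
      rcases Set.eq_empty_or_nonempty P with h | h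
      · rw [h, Set.ncard_empty] at hPm; omega
      · exact h
    have hbne : b.Nonempty := block_nonempty hP hb
    have hblock : MulAction.IsBlock G b := by
      intro g1 g2 hne
      by_contra hcon
      rw [Set.not_disjoint_iff] at hcon
      obtain ⟨x, hx1, hx2⟩ := hcon
      exact hne (block_eq_of_mem hP (hsmul_mem g1 hb) (hsmul_mem g2 hb) hx1 hx2)
    have horb : MulAction.orbit G b = P := by
      ext c
      constructor
      · rintro ⟨g, rfl⟩
        exact hsmul_mem g hb
      · intro hc
        obtain ⟨x, hx⟩ := hbne
        obtain ⟨y, hy⟩ := block_nonempty hP hc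
        obtain ⟨g, hg⟩ := MulAction.exists_smul_eq G x y
        have hgb : g • b ∈ P := hsmul_mem g hb
        have hyg : y ∈ g • b := by
          rw [← hg]
          exact Set.smul_mem_smul_set hx
        have : g • b = c := block_eq_of_mem hP hgb hc hyg hy
        exact ⟨g, this⟩
    have hcard := hblock.ncard_block_mul_ncard_orbit_eq hbne
    rw [horb, hPm, Nat.card_eq_fintype_card, Fintype.card_fin] at hcard
    exact Dvd.intro_left _ hcard
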